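/- Let k be a field, and let Φ₁, Φ₂ be alternating bilinear forms on a finite-dimensional k-vector space V. If there exist matrices Ψ₁, Ψ₂ (of size n × m) and a basis of V = k^n ⊕ k^m relative to which Φᵢ has block matrix [[0, Ψᵢ],[−Ψᵢᵀ, 0]] for i = 1,2 with Ψ₁ invertible (so n = m), then the adjoint ring A({Φ₁,Φ₂}) = {(L,R) : LΦᵢ = ΦᵢRᵀ for i=1,2} restricted to the diagonal action equals the centralizer of the slope σ = Φ₂Φ₁⁻¹ in the full matrix algebra: A = C_{M_{2n}(k)}(σ), and the center of A equals k[σ] ≅ k[x]/(m(x)) where m(x) is the minimal polynomial of σ. -/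

import Mathlib

open Matrix MvPolynomial

open Polynomial
open scoped Classical


section CRT
variable {R : Type*} [CommRing R] {ι : Type*} [DecidableEq ι]

lemma exists_max_dvd (μ : ι → R) (s : Finset ι) (hs : s.Nonempty) :
    ∃ a ∈ s, ∀ i ∈ s, μ a ∣ μ i → μ i ∣ μ a := by
  induction s using Finset.strongInduction with
  | _ s ih =>
    obtain ⟨b, hb⟩ := hs
    by_cases ht : (s.filter (fun i => μ b ∣ μ i ∧ ¬ μ i ∣ μ b)).Nonempty
    · set t := s.filter (fun i => μ b ∣ μ i ∧ ¬ μ i ∣ μ b) with htdef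
      have hsub : t ⊂ s := by
        refine Finset.ssubset_iff_of_subset (Finset.filter_subset _ _) |>.mpr ?_
        exact ⟨b, hb, by simp [htdef]⟩
      obtain ⟨a, hat, ha⟩ := ih t hsub ht
      have hba : μ b ∣ μ a := (Finset.mem_filter.mp hat).2.1
      refine ⟨a, (Finset.mem_filter.mp hat).1, fun i hi hdvd => ?_⟩
      by_cases hib : μ i ∣ μ b
      · exact hib.trans hba
      · exact ha i (Finset.mem_filter.mpr ⟨hi, hba.trans hdvd, hib⟩) hdvd
    · refine ⟨b, hb, fun i hi hdvd => ?_⟩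
      by_contra hib
      exact ht ⟨i, Finset.mem_filter.mpr ⟨hi, hdvd, hib⟩⟩

lemma crt_combine (μ f_ : ι → R)
    (hcop : ∀ i j, ¬ μ i ∣ μ j → ¬ μ j ∣ μ i → IsCoprime (μ i) (μ j))
    (hcomp : ∀ i j, μ j ∣ μ i → μ j ∣ f_ i - f_ j) (s : Finset ι) :
    ∃ f, ∀ i ∈ s, μ i ∣ f - f_ i := by
  induction s using Finset.strongInduction with
  | _ s ih =>
    rcases s.eq_empty_or_nonempty with rfl | hs
    · exact ⟨0, by simp⟩
    obtain ⟨a, has, hamax⟩ := exists_max_dvd μ s hs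
    set s₂ := s.filter (fun i => ¬ μ i ∣ μ a) with hs₂def
    have hs₂ : s₂ ⊂ s :=
      Finset.ssubset_iff_of_subset (Finset.filter_subset _ _) |>.mpr
        ⟨a, has, by simp [hs₂def]⟩
    obtain ⟨g, hg⟩ := ih s₂ hs₂
    have hcopN : IsCoprime (μ a) (∏ i ∈ s₂, μ i) := by
      refine IsCoprime.prod_right fun i hi => ?_
      have h1 : ¬ μ i ∣ μ a := (Finset.mem_filter.mp hi).2
      have h2 : ¬ μ a ∣ μ i := fun h => h1 (hamax i (Finset.mem_filter.mp hi).1 h)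
      exact (hcop a i h2 h1)
    obtain ⟨u, v, huv⟩ := hcopN
    set N := ∏ i ∈ s₂, μ i with hN
    refine ⟨f_ a * (v * N) + g * (u * μ a), fun i hi => ?_⟩
    by_cases hia : μ i ∣ μ a
    · have h1 : μ a ∣ f_ a * (v * N) + g * (u * μ a) - f_ a :=
        ⟨(g - f_ a) * u, by linear_combination f_ a * huv⟩
      have h2 := hcomp a i hia
      have := dvd_add (hia.trans h1) h2
      simpa using this
    · have hiN : μ i ∣ N := Finset.dvd_prod_of_mem μ (Finset.mem_filter.mpr ⟨hi, hia⟩)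
      have h1 : N ∣ f_ a * (v * N) + g * (u * μ a) - g :=
        ⟨(f_ a - g) * v, by linear_combination g * huv⟩
      have h2 := hg i (Finset.mem_filter.mpr ⟨hi, hia⟩)
      have := dvd_add (hiN.trans h1) h2
      simpa using this

end CRT

section Core
variable {R : Type*} [CommRing R] {ι : Type*} [Fintype ι] [DecidableEq ι]

lemma central_smul (μ : ι → R)
    (crt : ∀ f_ : ι → R, (∀ i j, μ j ∣ μ i → μ j ∣ f_ i - f_ j) →
      ∃ f, ∀ i, μ i ∣ f - f_ i)
    (L : (∀ i, R ⧸ (Submodule.span R {μ i} : Submodule R R)) →ₗ[R]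
         (∀ i, R ⧸ (Submodule.span R {μ i} : Submodule R R)))
    (hL : ∀ T : (∀ i, R ⧸ (Submodule.span R {μ i} : Submodule R R)) →ₗ[R]
         (∀ i, R ⧸ (Submodule.span R {μ i} : Submodule R R)), L ∘ₗ T = T ∘ₗ L) :
    ∃ f : R, ∀ x, L x = f • x := by
  set Q : ι → Type _ := fun i => (R ⧸ (Submodule.span R {μ i} : Submodule R R)) with hQ
  set e : ∀ i, (∀ j, Q j) := fun i => Pi.single i (Submodule.Quotient.mk 1) with he
  -- Step 1 : L preserves the i-th component of e i
  have hLe : ∀ i, L (e i) = Pi.single i ((L (e i)) i) := by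
    intro i
    have h := LinearMap.congr_fun
      (hL ((LinearMap.single R Q i) ∘ₗ (LinearMap.proj (R := R) (φ := Q) i))) (e i)
    simp only [LinearMap.comp_apply] at h
    have hTe : (LinearMap.single R Q i) ((LinearMap.proj (R := R) (φ := Q) i) (e i)) = e i := by
      simp [he]
    rw [hTe] at h
    simpa using h
  -- lift the diagonal entries
  have hsurj : ∀ i, ∃ g : R, (Submodule.Quotient.mk g : Q i) = (L (e i)) i := fun i =>
    Submodule.Quotient.mk_surjective _ _
  choose f_ hf_ using hsurj
  have hLe' : ∀ i, L (e i) = Pi.single i (Submodule.Quotient.mk (f_ i)) := by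
    intro i; rw [hLe i, hf_ i]
  -- Step 2 : compatibility
  have hcomp : ∀ i j, μ j ∣ μ i → μ j ∣ f_ i - f_ j := by
    intro i j hdvd
    have hle' : Submodule.span R {μ i} ≤
        (Submodule.span R {μ j} : Submodule R R).comap LinearMap.id := by
      rw [Submodule.comap_id, Submodule.span_le, Set.singleton_subset_iff, SetLike.mem_coe,
        Submodule.mem_span_singleton]
      obtain ⟨c, hc⟩ := hdvd
      exact ⟨c, by rw [smul_eq_mul, mul_comm, ← hc]⟩
    set Tm : Q i →ₗ[R] Q j := Submodule.mapQ _ _ LinearMap.id hle' with hTm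
    have h := LinearMap.congr_fun
      (hL ((LinearMap.single R Q j) ∘ₗ Tm ∘ₗ (LinearMap.proj i))) (e i)
    simp only [LinearMap.comp_apply, LinearMap.proj_apply, LinearMap.coe_single] at h
    have h1 : (e i) i = (Submodule.Quotient.mk 1 : Q i) := by simp [he]
    rw [h1, hTm, Submodule.mapQ_apply, LinearMap.id_apply] at h
    rw [show (Pi.single j (Submodule.Quotient.mk (1:R)) : ∀ l, Q l) = e j from rfl,
      hLe' j, ← hf_ i, Submodule.mapQ_apply, LinearMap.id_apply] at h
    have h3 := congrFun h j
    simp only [Pi.single_eq_same] at h3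
    have h4 := (Submodule.Quotient.eq _).mp h3
    rw [Submodule.mem_span_singleton] at h4
    obtain ⟨a, ha⟩ := h4
    rw [smul_eq_mul] at ha
    exact ⟨-a, by linear_combination ha⟩
  -- Step 3 : Chinese remainder
  obtain ⟨f, hf⟩ := crt f_ hcomp
  -- Step 4 : L = f • id
  have : L = (f • (LinearMap.id : (∀ i, Q i) →ₗ[R] (∀ i, Q i))) := by
    refine LinearMap.pi_ext fun i q => ?_
    obtain ⟨g, rfl⟩ := Submodule.Quotient.mk_surjective _ q
    have hsingle : (Pi.single i (Submodule.Quotient.mk g) : ∀ j, Q j) = g • e i := by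
      have : (Submodule.Quotient.mk g : Q i) = g • (Submodule.Quotient.mk 1 : Q i) := by
        rw [← Submodule.Quotient.mk_smul, smul_eq_mul, mul_one]
      rw [this, he]
      exact Pi.single_smul i g _
    obtain ⟨c, hc⟩ := hf i
    have key : (g • (Submodule.Quotient.mk (f_ i)) : Q i) = f • Submodule.Quotient.mk g := by
      rw [← Submodule.Quotient.mk_smul, ← Submodule.Quotient.mk_smul]
      refine (Submodule.Quotient.eq _).mpr ?_
      rw [Submodule.mem_span_singleton]
      exact ⟨-(g * c), by simp only [smul_eq_mul]; linear_combination g * hc⟩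
    rw [hsingle, _root_.map_smul, hLe' i, LinearMap.smul_apply, LinearMap.id_apply,
      ← Pi.single_smul, ← Pi.single_smul, key]
    have hmkg : (Submodule.Quotient.mk g : Q i) = g • Submodule.Quotient.mk 1 := by
      rw [← Submodule.Quotient.mk_smul, smul_eq_mul, mul_one]
    rw [Pi.single_smul, ← hmkg]
  exact ⟨f, fun x => by rw [this]; rfl⟩
end Core

section PP
variable {R : Type*} [CommRing R] [IsDomain R] [IsPrincipalIdealRing R]

lemma primepow_cop {p q : R} (hp : Irreducible p) (hq : Irreducible q) {a b : ℕ}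
    (h1 : ¬ p^a ∣ q^b) (h2 : ¬ q^b ∣ p^a) : IsCoprime (p^a) (q^b) := by
  by_cases hpq : p ∣ q^b
  · have hprime : Prime p := (UniqueFactorizationMonoid.irreducible_iff_prime).mp hp
    have hpq' : p ∣ q := hprime.dvd_of_dvd_pow hpq
    have hassoc : Associated p q := hp.associated_of_dvd hq hpq'
    rcases le_total a b with hab | hab
    · exact absurd ((pow_dvd_pow p hab).trans (hassoc.pow_pow (n := b)).dvd) h1
    · exact absurd ((pow_dvd_pow q hab).trans (hassoc.symm.pow_pow (n := a)).dvd) h2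
  · exact IsCoprime.pow_left ((hp.coprime_iff_not_dvd).mpr hpq)
end PP

section App
variable {k : Type*} [Field k] {d : Type*} [Fintype d] [DecidableEq d]

lemma matrix_central_mem_adjoin (σ L : Matrix d d k)
    (h1 : L * σ = σ * L) (h2 : ∀ Y : Matrix d d k, Y * σ = σ * Y → L * Y = Y * L) :
    L ∈ Algebra.adjoin k ({σ} : Set (Matrix d d k)) := by
  set M : Type _ := d → k with hM
  set φ : M →ₗ[k] M := Matrix.toLin' σ with hφ
  set Lℓ : M →ₗ[k] M := Matrix.toLin' L with hLl
  set V := Module.AEval' φ with hV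
  set ofV := Module.AEval'.of φ with hof
  -- integrality of φ
  have hint : IsIntegral k φ := IsIntegral.of_finite k φ
  -- torsion
  have htors : Module.IsTorsion (Polynomial k) V := by
    intro v
    refine ⟨⟨minpoly k φ, mem_nonZeroDivisors_of_ne_zero (minpoly.ne_zero hint)⟩, ?_⟩
    apply ofV.symm.injective
    rw [Submonoid.smul_def, Module.AEval.of_symm_smul, minpoly.aeval, map_zero]
    exact zero_smul _ _
  obtain ⟨ι, fι, p, hp, ex, ⟨ψ0⟩⟩ :=
    Module.equiv_directSum_of_isTorsion (R := Polynomial k) (M := V) htors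
  set μ : ι → Polynomial k := fun i => p i ^ ex i with hμ
  have : Fintype ι := fι
  set ψ : V ≃ₗ[Polynomial k]
      (∀ i, Polynomial k ⧸ (Submodule.span (Polynomial k) {μ i} : Submodule (Polynomial k) (Polynomial k))) :=
    ψ0.trans (DirectSum.linearEquivFunOnFintype _ _ _) with hψ
  -- the lift of L to V
  have hcomm : ∀ m : M, Lℓ (φ m) = φ (Lℓ m) := by
    intro m
    have : Lℓ ∘ₗ φ = φ ∘ₗ Lℓ := by
      rw [hφ, hLl, ← Matrix.toLin'_mul, ← Matrix.toLin'_mul, h1]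
    exact LinearMap.congr_fun this m
  set LV : V →ₗ[Polynomial k] V :=
    LinearMap.ofAEval φ (ofV.toLinearMap ∘ₗ Lℓ) (by
      intro m
      simp only [LinearMap.comp_apply, LinearEquiv.coe_coe]
      show ofV (Lℓ (φ • m)) = (X : Polynomial k) • ofV (Lℓ m)
      rw [Module.AEval.X_smul_of]
      show ofV (Lℓ (φ m)) = ofV (φ (Lℓ m))
      rw [hcomm m]) with hLV
  have hLVapp : ∀ v : V, LV v = ofV (Lℓ (ofV.symm v)) := fun v => rfl
  -- centrality of LV
  have hLVc : ∀ T : V →ₗ[Polynomial k] V, LV ∘ₗ T = T ∘ₗ LV := by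
    intro T
    set T₀ : M →ₗ[k] M :=
      ofV.symm.toLinearMap ∘ₗ (T.restrictScalars k) ∘ₗ ofV.toLinearMap with hT₀
    have hT₀app : ∀ m, T₀ m = ofV.symm (T (ofV m)) := fun m => rfl
    have hTof : ∀ m, T (ofV m) = ofV (T₀ m) := by
      intro m; rw [hT₀app, LinearEquiv.apply_symm_apply]
    have hT₀φ : ∀ m, T₀ (φ m) = φ (T₀ m) := by
      intro m
      rw [hT₀app]
      have e1 : ofV (φ m) = (X : Polynomial k) • ofV m := (Module.AEval.X_smul_of φ m).symm
      rw [e1, _root_.map_smul, Module.AEval.of_symm_smul]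
      simp only [Polynomial.aeval_X]
      rfl
    have hY : (LinearMap.toMatrix' T₀) * σ = σ * (LinearMap.toMatrix' T₀) := by
      have e1 : T₀ ∘ₗ φ = φ ∘ₗ T₀ := LinearMap.ext hT₀φ
      apply Matrix.toLin'.injective
      rw [Matrix.toLin'_mul, Matrix.toLin'_mul, Matrix.toLin'_toMatrix']
      exact e1
    have hLT₀ : Lℓ ∘ₗ T₀ = T₀ ∘ₗ Lℓ := by
      have := h2 _ hY
      have e1 := congrArg (fun A => Matrix.toLin' A) this
      simpa [Matrix.toLin'_mul, hLl] using e1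
    refine LinearMap.ext fun v => ?_
    rw [LinearMap.comp_apply, LinearMap.comp_apply, hLVapp, hLVapp]
    have e2 : ofV.symm (T v) = T₀ (ofV.symm v) := by
      rw [hT₀app, LinearEquiv.apply_symm_apply]
    rw [e2]
    have e3 : Lℓ (T₀ (ofV.symm v)) = T₀ (Lℓ (ofV.symm v)) := LinearMap.congr_fun hLT₀ _
    rw [e3, ← hTof]
  -- transfer to the canonical form and apply the center computation
  set LN := ψ.toLinearMap ∘ₗ LV ∘ₗ ψ.symm.toLinearMap with hLN
  have hLNc : ∀ T, LN ∘ₗ T = T ∘ₗ LN := by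
    intro T
    set T' := ψ.symm.toLinearMap ∘ₗ T ∘ₗ ψ.toLinearMap with hT'
    refine LinearMap.ext fun x => ?_
    have h := LinearMap.congr_fun (hLVc T') (ψ.symm x)
    simp only [LinearMap.comp_apply, LinearEquiv.coe_coe, hT', hLN,
      LinearEquiv.apply_symm_apply] at h ⊢
    rw [h, LinearEquiv.apply_symm_apply]
  have hcop : ∀ i j, ¬ μ i ∣ μ j → ¬ μ j ∣ μ i → IsCoprime (μ i) (μ j) :=
    fun i j hij hji => primepow_cop (hp i) (hp j) hij hji
  obtain ⟨f, hf⟩ := central_smul μ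
    (fun f_ hcomp => by
      obtain ⟨f, hf⟩ := crt_combine μ f_ hcop hcomp Finset.univ
      exact ⟨f, fun i => hf i (Finset.mem_univ i)⟩)
    LN hLNc
  -- conclude L = aeval σ f
  have hLVf : ∀ v : V, LV v = f • v := by
    intro v
    have h := hf (ψ v)
    have : ψ (LV v) = ψ (f • v) := by
      rw [_root_.map_smul]
      have : LN (ψ v) = ψ (LV v) := by
        simp [hLN, LinearMap.comp_apply]
      rw [← this, h]
    exact ψ.injective this
  have hLaeval : Lℓ = Polynomial.aeval φ f := by
    refine LinearMap.ext fun m => ?_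
    have h := hLVf (ofV m)
    rw [hLVapp, LinearEquiv.symm_apply_apply, ← Module.AEval.of_aeval_smul] at h
    have := ofV.injective h
    rw [this]
    rfl
  have hLfin : L = Polynomial.aeval σ f := by
    have e1 : L = LinearMap.toMatrix' Lℓ := by rw [hLl, LinearMap.toMatrix'_toLin']
    have e2 : LinearMap.toMatrixAlgEquiv' (Polynomial.aeval φ f)
        = Polynomial.aeval (LinearMap.toMatrixAlgEquiv' φ) f :=
      (Polynomial.aeval_algHom_apply (LinearMap.toMatrixAlgEquiv' : (M →ₗ[k] M) ≃ₐ[k] _).toAlgHom φ f).symm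
    have e4 : (LinearMap.toMatrixAlgEquiv' φ : Matrix d d k) = σ := by
      show LinearMap.toMatrix' φ = σ
      rw [hφ, LinearMap.toMatrix'_toLin']
    rw [e1, hLaeval,
      show (LinearMap.toMatrix' (Polynomial.aeval φ f) : Matrix d d k)
        = LinearMap.toMatrixAlgEquiv' (Polynomial.aeval φ f) from rfl, e2, e4]
  rw [hLfin, Algebra.adjoin_singleton_eq_range_aeval]
  exact ⟨f, rfl⟩
end App

section Helpers

lemma commute_aeval {k A : Type*} [CommSemiring k] [Semiring A] [Algebra k A] {x y : A}
    (h : x * y = y * x) (f : Polynomial k) :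
    (Polynomial.aeval x f) * y = y * (Polynomial.aeval x f) := by
  have hmem : (Polynomial.aeval x f) ∈ Subalgebra.centralizer k ({y} : Set A) := by
    have hx : x ∈ Subalgebra.centralizer k ({y} : Set A) := by
      rw [Subalgebra.mem_centralizer_iff]
      intro z hz
      rw [Set.mem_singleton_iff] at hz
      subst hz
      exact h.symm
    have hle : Algebra.adjoin k ({x} : Set A) ≤ Subalgebra.centralizer k ({y} : Set A) :=
      Algebra.adjoin_le (Set.singleton_subset_iff.mpr hx)
    apply hle
    rw [Algebra.adjoin_singleton_eq_range_aeval]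
    exact ⟨f, rfl⟩
  rw [Subalgebra.mem_centralizer_iff] at hmem
  exact (hmem y (Set.mem_singleton y)).symm

lemma adjoin_equiv_adjoinRoot {k A : Type*} [Field k] [Ring A] [Algebra k A] (σ : A) :
    Nonempty ((Algebra.adjoin k ({σ} : Set A)) ≃ₐ[k] AdjoinRoot (minpoly k σ)) := by
  have hmem : ∀ g : Polynomial k, Polynomial.aeval σ g ∈ Algebra.adjoin k ({σ} : Set A) := by
    intro g
    rw [Algebra.adjoin_singleton_eq_range_aeval]
    exact ⟨g, rfl⟩
  let φ' : Polynomial k →ₐ[k] Algebra.adjoin k ({σ} : Set A) :=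
    (Polynomial.aeval σ).codRestrict _ hmem
  have hsurj : Function.Surjective φ' := by
    rintro ⟨y, hy⟩
    rw [Algebra.adjoin_singleton_eq_range_aeval] at hy
    obtain ⟨g, hg⟩ := hy
    exact ⟨g, Subtype.ext hg⟩
  have hker : RingHom.ker φ'.toRingHom = Ideal.span {minpoly k σ} := by
    ext g
    have h1 : φ' g = 0 ↔ Polynomial.aeval σ g = 0 := by
      rw [← Subtype.coe_inj]
      rfl
    have h2 : g ∈ RingHom.ker φ'.toRingHom ↔ (Polynomial.aeval σ) g = 0 :=
      ⟨fun hg => h1.mp hg, fun hg => h1.mpr hg⟩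
    rw [h2, ← RingHom.mem_ker, minpoly.ker_aeval_eq_span_minpoly]
  exact ⟨((Ideal.quotientKerAlgEquivOfSurjective hsurj).symm.trans
    (Ideal.quotientEquivAlgOfEq k hker))⟩

end Helpers


/-- For a sloped pair of alternating forms
`Φᵢ = [[0, Ψᵢ],[−Ψᵢᵀ, 0]]` with `Ψ₁` invertible, the adjoint ring (first components of pairs
`(L, R)` with `L Φᵢ = Φᵢ Rᵀ`, `i = 1,2`) equals the centralizer of the slope
`σ = Φ₂ Φ₁⁻¹` in the full matrix algebra, and its center equals `k[σ] ≅ k[x]/(m(x))`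
with `m` the minimal polynomial of `σ`. -/
theorem adjoint_ring_of_sloped_pair_eq_centralizer_of_slope
    (k : Type*) [Field k] (n : ℕ)
    (Ψ₁ Ψ₂ : Matrix (Fin n) (Fin n) k) (hΨ₁ : IsUnit Ψ₁)
    (Φ₁ Φ₂ σ : Matrix (Fin n ⊕ Fin n) (Fin n ⊕ Fin n) k)
    (hΦ₁ : Φ₁ = Matrix.fromBlocks 0 Ψ₁ (-Ψ₁ᵀ) 0)
    (hΦ₂ : Φ₂ = Matrix.fromBlocks 0 Ψ₂ (-Ψ₂ᵀ) 0)
    (hσ : σ = Φ₂ * Φ₁⁻¹) :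
    ({L : Matrix (Fin n ⊕ Fin n) (Fin n ⊕ Fin n) k |
        ∃ R, L * Φ₁ = Φ₁ * Rᵀ ∧ L * Φ₂ = Φ₂ * Rᵀ}
      = {L | L * σ = σ * L}) ∧
    ({L : Matrix (Fin n ⊕ Fin n) (Fin n ⊕ Fin n) k |
        L * σ = σ * L ∧ ∀ Y, Y * σ = σ * Y → L * Y = Y * L}
      = (Algebra.adjoin k {σ} : Subalgebra k (Matrix (Fin n ⊕ Fin n) (Fin n ⊕ Fin n) k))) ∧
    Nonempty ((Algebra.adjoin k {σ} : Subalgebra k (Matrix (Fin n ⊕ Fin n) (Fin n ⊕ Fin n) k))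
        ≃ₐ[k] AdjoinRoot (minpoly k σ)) := by
  -- Φ₁ is invertible
  have hdetΨ : IsUnit Ψ₁.det := (Matrix.isUnit_iff_isUnit_det _).mp hΨ₁
  have hdetT : IsUnit (-Ψ₁ᵀ).det := by
    have : IsUnit Ψ₁ᵀ.det := by rw [Matrix.det_transpose]; exact hdetΨ
    exact ((Matrix.isUnit_iff_isUnit_det _).mp ((Matrix.isUnit_iff_isUnit_det _).mpr this).neg)
  have hAE : Φ₁ * Matrix.fromBlocks 0 (-Ψ₁ᵀ)⁻¹ Ψ₁⁻¹ 0 = 1 := by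
    rw [hΦ₁]
    simp [Matrix.fromBlocks_multiply, Matrix.mul_nonsing_inv _ hdetΨ,
      Matrix.mul_nonsing_inv _ hdetT]
  have hEA : Matrix.fromBlocks 0 (-Ψ₁ᵀ)⁻¹ Ψ₁⁻¹ 0 * Φ₁ = 1 := by
    rw [hΦ₁]
    simp [Matrix.fromBlocks_multiply, Matrix.nonsing_inv_mul _ hdetΨ,
      Matrix.nonsing_inv_mul _ hdetT]
  have hU : IsUnit Φ₁ := isUnit_iff_exists.mpr ⟨_, hAE, hEA⟩
  have hdet : IsUnit Φ₁.det := (Matrix.isUnit_iff_isUnit_det _).mp hU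
  have hinv : Φ₁ * Φ₁⁻¹ = 1 := Matrix.mul_nonsing_inv _ hdet
  have hinv' : Φ₁⁻¹ * Φ₁ = 1 := Matrix.nonsing_inv_mul _ hdet
  have hσΦ₁ : σ * Φ₁ = Φ₂ := by rw [hσ, mul_assoc, hinv', mul_one]
  have cancel : ∀ X Y : Matrix (Fin n ⊕ Fin n) (Fin n ⊕ Fin n) k,
      X * Φ₁ = Y * Φ₁ → X = Y := by
    intro X Y hXY
    have h := congrArg (fun Z => Z * Φ₁⁻¹) hXY
    simpa [mul_assoc, hinv] using h
  refine ⟨?_, ?_, adjoin_equiv_adjoinRoot σ⟩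
  · ext L
    simp only [Set.mem_setOf_eq]
    constructor
    · rintro ⟨Rm, hR1, hR2⟩
      refine cancel _ _ ?_
      calc L * σ * Φ₁ = L * (σ * Φ₁) := by rw [mul_assoc]
        _ = L * Φ₂ := by rw [hσΦ₁]
        _ = Φ₂ * Rmᵀ := hR2
        _ = σ * Φ₁ * Rmᵀ := by rw [hσΦ₁]
        _ = σ * (L * Φ₁) := by rw [mul_assoc, ← hR1]
        _ = σ * L * Φ₁ := by rw [mul_assoc]
    · intro h
      refine ⟨(Φ₁⁻¹ * L * Φ₁)ᵀ, ?_, ?_⟩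
      · rw [Matrix.transpose_transpose]
        calc L * Φ₁ = 1 * (L * Φ₁) := by rw [one_mul]
          _ = Φ₁ * (Φ₁⁻¹ * L * Φ₁) := by
              rw [← hinv]; simp only [mul_assoc]
      · rw [Matrix.transpose_transpose]
        calc L * Φ₂ = L * (σ * Φ₁) := by rw [hσΦ₁]
          _ = L * σ * Φ₁ := by rw [mul_assoc]
          _ = σ * L * Φ₁ := by rw [h]
          _ = Φ₂ * Φ₁⁻¹ * L * Φ₁ := by rw [← hσ]
          _ = Φ₂ * (Φ₁⁻¹ * L * Φ₁) := by simp only [mul_assoc]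
  · ext L
    simp only [Set.mem_setOf_eq, SetLike.mem_coe]
    constructor
    · rintro ⟨hc, hall⟩
      exact matrix_central_mem_adjoin σ L hc hall
    · intro hL
      rw [Algebra.adjoin_singleton_eq_range_aeval] at hL
      obtain ⟨g, hg⟩ := hL
      refine ⟨?_, ?_⟩
      · rw [← hg]; exact commute_aeval rfl g
      · intro Y hY
        rw [← hg]
        exact commute_aeval hY.symm g
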